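/- Let D be an integral domain. Then D is a v-domain if and only if for all nonzero a, b ∈ D, (((a) :_D (b)) + ((b) :_D (a)))^v = D, where ((a) :_D (b)) := {x ∈ D | xb ∈ aD}. -/

import Mathlib

open FractionalIdeal
open scoped Pointwise

variable {D K : Type*} [CommRing D] [IsDomain D] [Field K] [Algebra D K] [IsFractionRing D K]

/-- The `v`-operation: `A ↦ (A⁻¹)⁻¹`, where `A⁻¹ = (D : A) = 1 / A`. -/
noncomputable def vop (A : FractionalIdeal (nonZeroDivisors D) K) :
    FractionalIdeal (nonZeroDivisors D) K := 1 / (1 / A)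

/-- `A` is `v`-invertible if `(A·A⁻¹)^v = D`. -/
noncomputable def IsVInvertible (A : FractionalIdeal (nonZeroDivisors D) K) : Prop :=
  vop (A * (1 / A)) = 1

namespace VAux

set_option linter.unusedSectionVars false

local notation "FI" => FractionalIdeal (nonZeroDivisors D) K

lemma mul_ne_zero' {A B : FI} (hA : A ≠ 0) (hB : B ≠ 0) : A * B ≠ 0 := by
  rw [← coeToSubmodule_ne_bot] at hA hB
  obtain ⟨x, hx, hx0⟩ := Submodule.exists_mem_ne_zero_of_ne_bot hA
  obtain ⟨y, hy, hy0⟩ := Submodule.exists_mem_ne_zero_of_ne_bot hB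
  intro h
  have : x * y ∈ A * B := mul_mem_mul hx hy
  rw [h, mem_zero_iff] at this
  exact mul_ne_zero hx0 hy0 this

lemma one_div_ne_zero {A : FI} (hA : A ≠ 0) : 1 / A ≠ 0 := by
  intro h
  have hd : algebraMap D K (A.den : D) ∈ (1 / A : FI) := by
    rw [FractionalIdeal.mem_div_iff_of_ne_zero hA]
    intro y hy
    have hmem := Submodule.smul_mem_pointwise_smul y (A.den : D) (A : Submodule D K) hy
    rw [← Submonoid.smul_def, den_mul_self_eq_num] at hmem
    obtain ⟨z, _, hz⟩ := hmem
    rw [mem_one_iff]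
    exact ⟨z, by simpa [Submonoid.smul_def, Algebra.smul_def] using hz⟩
  rw [h, mem_zero_iff] at hd
  exact IsFractionRing.to_map_ne_zero_of_mem_nonZeroDivisors A.den.2 hd

lemma vop_zero : vop (0 : FI) = 0 := by
  simp [vop]

lemma le_vop (A : FI) : A ≤ vop A := by
  by_cases hA : A = 0
  · simp [hA, vop_zero]
  · rw [vop, le_div_iff_mul_le (one_div_ne_zero hA)]
    exact mul_one_div_le_one

lemma one_div_anti {A B : FI} (hA : A ≠ 0) (h : A ≤ B) : 1 / B ≤ 1 / A := by
  rw [le_div_iff_mul_le hA]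
  calc (1 / B) * A ≤ (1 / B) * B := mul_right_mono h
    _ ≤ 1 := by rw [mul_comm]; exact mul_one_div_le_one

lemma vop_mono {A B : FI} (h : A ≤ B) : vop A ≤ vop B := by
  by_cases hA : A = 0
  · rw [hA, vop_zero]; exact zero_le _
  · have hB : B ≠ 0 := fun hB => hA (le_antisymm (hB ▸ h) (zero_le A))
    exact one_div_anti (one_div_ne_zero hB) (one_div_anti hA h)

lemma vop_one : vop (1 : FI) = 1 := by
  rw [vop, FractionalIdeal.div_one, FractionalIdeal.div_one]

lemma one_div_vop (A : FI) : 1 / vop A = 1 / A := by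
  by_cases hA : A = 0
  · simp [hA, vop_zero]
  · exact le_antisymm (one_div_anti hA (le_vop A)) (le_vop (1 / A))

lemma vop_vop (A : FI) : vop (vop A) = vop A := by
  rw [vop, one_div_vop, ← vop]

lemma vop_mul_vop_right (A B : FI) : vop (A * vop B) = vop (A * B) := by
  by_cases hB : B = 0
  · simp [hB, vop_zero]
  by_cases hA : A = 0
  · simp [hA]
  have hAB : A * B ≠ 0 := mul_ne_zero' hA hB
  refine le_antisymm ?_ (vop_mono (mul_right_mono (le_vop B)))
  have key : A * vop B ≤ vop (A * B) := by
    conv_rhs => rw [vop]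
    rw [le_div_iff_mul_le (one_div_ne_zero hAB)]
    have h1 : A * (1 / (A * B)) ≤ 1 / B := by
      rw [le_div_iff_mul_le hB, mul_assoc, mul_comm (1 / (A*B)) B, ← mul_assoc]
      exact mul_one_div_le_one
    calc A * vop B * (1 / (A * B)) = vop B * (A * (1 / (A * B))) := by ring
      _ ≤ vop B * (1 / B) := mul_right_mono h1
      _ = (1 / B) * (1 / (1 / B)) := by rw [vop, mul_comm]
      _ ≤ 1 := mul_one_div_le_one
  calc vop (A * vop B) ≤ vop (vop (A * B)) := vop_mono key
    _ = vop (A * B) := vop_vop _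

lemma ne_zero_of_isVInvertible {A : FI} (h : IsVInvertible A) : A ≠ 0 := by
  rintro rfl
  rw [IsVInvertible, FractionalIdeal.div_zero, mul_zero, vop_zero] at h
  exact zero_ne_one h

lemma isVInvertible_one : IsVInvertible (1 : FI) := by
  rw [IsVInvertible, FractionalIdeal.div_one, mul_one, vop_one]

lemma isVInvertible_mul {A B : FI} (hA : IsVInvertible A) (hB : IsVInvertible B) :
    IsVInvertible (A * B) := by
  have hA0 := ne_zero_of_isVInvertible hA
  have hB0 := ne_zero_of_isVInvertible hB
  have hAB : A * B ≠ 0 := mul_ne_zero' hA0 hB0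
  rw [IsVInvertible] at hA hB ⊢
  refine le_antisymm ((vop_mono mul_one_div_le_one).trans (le_of_eq vop_one)) ?_
  have hsub : (A * (1 / A)) * (B * (1 / B)) ≤ (A * B) * (1 / (A * B)) := by
    have h2 : (1 / A) * (1 / B) ≤ 1 / (A * B) := by
      rw [le_div_iff_mul_le hAB]
      calc 1 / A * (1 / B) * (A * B) = (A * (1 / A)) * (B * (1 / B)) := by ring
        _ ≤ 1 * (B * (1 / B)) := mul_left_mono mul_one_div_le_one
        _ ≤ 1 * 1 := mul_right_mono mul_one_div_le_one
        _ = 1 := one_mul 1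
    calc (A * (1 / A)) * (B * (1 / B)) = (A * B) * ((1 / A) * (1 / B)) := by ring
      _ ≤ (A * B) * (1 / (A * B)) := mul_right_mono h2
  calc (1 : FI) = vop ((A * (1/A)) * (B * (1/B))) := by
        rw [← vop_mul_vop_right, hB, mul_one, hA]
    _ ≤ vop ((A * B) * (1 / (A * B))) := vop_mono hsub

lemma isVInvertible_of_mul {A B : FI} (h : IsVInvertible (A * B)) : IsVInvertible A := by
  have hAB : A * B ≠ 0 := ne_zero_of_isVInvertible h
  have hA : A ≠ 0 := fun h0 => hAB (by rw [h0, zero_mul])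
  rw [IsVInvertible] at h ⊢
  refine le_antisymm ((vop_mono mul_one_div_le_one).trans (le_of_eq vop_one)) ?_
  have hsub : (A * B) * (1 / (A * B)) ≤ A * (1 / A) := by
    have h2 : B * (1 / (A * B)) ≤ 1 / A := by
      rw [le_div_iff_mul_le hA]
      calc B * (1 / (A * B)) * A = (A * B) * (1 / (A * B)) := by ring
        _ ≤ 1 := mul_one_div_le_one
    calc (A * B) * (1 / (A * B)) = A * (B * (1 / (A * B))) := by ring
      _ ≤ A * (1 / A) := mul_right_mono h2
  exact le_trans (le_of_eq h.symm) (vop_mono hsub)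

lemma isVInvertible_spanSingleton {z : K} (hz : z ≠ 0) :
    IsVInvertible (spanSingleton (nonZeroDivisors D) z) := by
  rw [IsVInvertible, one_div_spanSingleton, spanSingleton_mul_spanSingleton,
    mul_inv_cancel₀ hz, spanSingleton_one, vop_one]

/-! ### The combinatorial key identity -/

lemma le_add_right' (A B : Ideal D) : A ≤ A + B := by
  rw [Ideal.add_eq_sup]; exact le_sup_left

lemma le_add_left' (A B : Ideal D) : A ≤ B + A := by
  rw [Ideal.add_eq_sup]; exact le_sup_right

lemma add_le' {A B C : Ideal D} (h1 : A ≤ C) (h2 : B ≤ C) : A + B ≤ C := by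
  rw [Ideal.add_eq_sup]; exact sup_le h1 h2

/-- Key combinatorial identity: there is an ideal `Y` with
`(span s + (c)) * Y = span s * ∏_{x ∈ s} ((x) + (c))`. -/
lemma key_identity (c : D) (s : Finset D) :
    ∃ Y : Ideal D,
      (Ideal.span (s : Set D) + Ideal.span {c}) * Y
        = Ideal.span (s : Set D) * ∏ x ∈ s, (Ideal.span {x} + Ideal.span {c}) := by
  set C : Ideal D := Ideal.span {c} with hC
  suffices h : ∃ Y : Ideal D,
      (∏ x ∈ s, (Ideal.span {x} + C) = Y + C ^ s.card) ∧
      (C * Y ≤ Ideal.span (s : Set D) * Y + C ^ s.card * Ideal.span (s : Set D)) ∧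
      (C ^ s.card * Ideal.span (s : Set D) ≤ C * Y) by
    obtain ⟨Y, hi, hii, hiii⟩ := h
    set A : Ideal D := Ideal.span (s : Set D)
    refine ⟨Y, le_antisymm ?_ ?_⟩
    · rw [hi, add_mul]
      refine add_le' (Ideal.mul_mono le_rfl (le_add_right' _ _)) ?_
      calc C * Y ≤ A * Y + C ^ s.card * A := hii
        _ = A * (Y + C ^ s.card) := by ring
    · rw [hi]
      have : A * (Y + C ^ s.card) = A * Y + C ^ s.card * A := by ring
      rw [this]
      exact add_le' (Ideal.mul_mono (le_add_right' _ _) le_rfl)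
        (hiii.trans (Ideal.mul_mono (le_add_left' _ _) le_rfl))
  classical
  induction s using Finset.induction with
  | empty => exact ⟨0, by simp, by simp, by simp⟩
  | @insert a s ha ih =>
      obtain ⟨Y, hi, hii, hiii⟩ := ih
      set A : Ideal D := Ideal.span (s : Set D) with hA
      set X : Ideal D := Ideal.span {a} with hX
      set n := s.card with hn
      have hcard : (insert a s).card = n + 1 := Finset.card_insert_of_notMem ha
      have hspan : Ideal.span ((insert a s : Finset D) : Set D) = X + A := by
        rw [Finset.coe_insert, Ideal.span_insert, Ideal.add_eq_sup]
      set Y' : Ideal D := (X + C) * Y + X * C ^ n with hY'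
      have hXY' : X * C ^ n ≤ Y' := le_add_left' _ _
      have hXCY : (X + C) * Y ≤ Y' := le_add_right' _ _
      refine ⟨Y', ?_, ?_, ?_⟩
      · rw [Finset.prod_insert ha, hi, hcard, hY']
        ring
      · rw [hspan, hcard]
        have expand : C * Y' = (X + C) * (C * Y) + X * C ^ (n + 1) := by rw [hY']; ring
        rw [expand]
        refine add_le' ?_ ?_
        · refine (Ideal.mul_mono le_rfl hii).trans ?_
          have e2 : (X + C) * (A * Y + C ^ n * A)
              = A * ((X + C) * Y) + A * (X * C ^ n) + C ^ (n + 1) * A := by ring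
          rw [e2]
          refine add_le' (add_le' ?_ ?_) ?_
          · exact (Ideal.mul_mono (le_add_left' _ _) hXCY).trans (le_add_right' _ _)
          · exact (Ideal.mul_mono (le_add_left' _ _) hXY').trans (le_add_right' _ _)
          · exact (Ideal.mul_mono le_rfl (le_add_left' _ _)).trans (le_add_left' _ _)
        · have e3 : X * C ^ (n + 1) = C ^ (n + 1) * X := by ring
          rw [e3]
          exact (Ideal.mul_mono le_rfl (le_add_right' _ _)).trans (le_add_left' _ _)
      · rw [hspan, hcard, mul_add]
        refine add_le' ?_ ?_
        · have e4 : C ^ (n + 1) * X = C * (X * C ^ n) := by ring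
          rw [e4]
          exact Ideal.mul_mono le_rfl hXY'
        · have e5 : C ^ (n + 1) * A = C * (C ^ n * A) := by ring
          rw [e5]
          exact Ideal.mul_mono le_rfl
            (hiii.trans ((Ideal.mul_mono (le_add_left' _ _) le_rfl).trans hXCY))

/-! ### The bridge: `F·F⁻¹` for `F = (a, b)` is the sum of the two colon ideals -/

lemma coeIdeal_span_pair_ne_zero {a b : D} (ha : a ≠ 0) :
    (↑(Ideal.span ({a, b} : Set D)) : FI) ≠ 0 := by
  rw [coeIdeal_ne_zero' le_rfl]
  intro h0
  have hmem : a ∈ Ideal.span ({a, b} : Set D) := Ideal.subset_span (by simp)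
  rw [h0] at hmem
  exact ha hmem

lemma colon_piece (a b : D) (ha : a ≠ 0) (hb : b ≠ 0) :
    spanSingleton (nonZeroDivisors D) (algebraMap D K a) *
        (1 / (↑(Ideal.span ({a, b} : Set D)) : FI))
      = ↑(Submodule.colon (Ideal.span {a} : Ideal D) (Ideal.span {b})) := by
  have hF : (↑(Ideal.span ({a, b} : Set D)) : FI) ≠ 0 := coeIdeal_span_pair_ne_zero ha
  have ha' : algebraMap D K a ≠ 0 := fun h =>
    ha (IsFractionRing.injective D K (h.trans (_root_.map_zero _).symm))
  have hb' : algebraMap D K b ≠ 0 := fun h =>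
    hb (IsFractionRing.injective D K (h.trans (_root_.map_zero _).symm))
  apply FractionalIdeal.ext
  intro x
  constructor
  · intro hx
    obtain ⟨y, hy, rfl⟩ := mem_singleton_mul.mp hx
    rw [mem_div_iff_of_ne_zero hF] at hy
    have h1 : y * algebraMap D K a ∈ (1 : FI) :=
      hy _ (mem_coeIdeal_of_mem _ (Ideal.subset_span (by simp)))
    have h2 : y * algebraMap D K b ∈ (1 : FI) :=
      hy _ (mem_coeIdeal_of_mem _ (Ideal.subset_span (by simp)))
    obtain ⟨r, hr⟩ := (mem_one_iff _).mp h1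
    obtain ⟨t, ht⟩ := (mem_one_iff _).mp h2
    rw [mem_coeIdeal]
    refine ⟨r, ?_, by rw [hr, mul_comm]⟩
    rw [Ideal.mem_colon_span_singleton]
    have key : algebraMap D K (r * b) = algebraMap D K (t * a) := by
      rw [_root_.map_mul, _root_.map_mul, hr, ht]
      ring
    rw [IsFractionRing.injective D K key]
    exact Ideal.mul_mem_left _ _ (Ideal.mem_span_singleton_self a)
  · intro hx
    obtain ⟨r, hr, rfl⟩ := (mem_coeIdeal _).mp hx
    rw [Ideal.mem_colon_span_singleton, Ideal.mem_span_singleton'] at hr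
    obtain ⟨t, ht⟩ := hr
    refine mem_singleton_mul.mpr ⟨algebraMap D K r / algebraMap D K a, ?_, ?_⟩
    · rw [mem_div_iff_of_ne_zero hF]
      intro w hw
      obtain ⟨u, hu, rfl⟩ := (mem_coeIdeal _).mp hw
      obtain ⟨p, q, hpq⟩ := Ideal.mem_span_pair.mp hu
      rw [mem_one_iff]
      refine ⟨p * r + q * t, ?_⟩
      rw [div_mul_eq_mul_div, eq_comm, div_eq_iff ha', ← _root_.map_mul, ← _root_.map_mul]
      congr 1
      rw [← hpq]
      linear_combination (-q) * ht
    · field_simp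

lemma pair_bridge (a b : D) (ha : a ≠ 0) (hb : b ≠ 0) :
    (↑(Ideal.span ({a, b} : Set D)) : FI) * (1 / ↑(Ideal.span ({a, b} : Set D)))
      = ↑(Submodule.colon (Ideal.span {a} : Ideal D) (Ideal.span {b}) ⊔
          Submodule.colon (Ideal.span {b} : Ideal D) (Ideal.span {a})) := by
  have hsplit : (↑(Ideal.span ({a, b} : Set D)) : FI)
      = spanSingleton (nonZeroDivisors D) (algebraMap D K a)
        + spanSingleton (nonZeroDivisors D) (algebraMap D K b) := by
    rw [show ({a, b} : Set D) = insert a {b} from rfl, Ideal.span_insert, ← coeIdeal_span_singleton,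
      ← coeIdeal_span_singleton, ← coeIdeal_sup]
  have h2 : spanSingleton (nonZeroDivisors D) (algebraMap D K b) *
        (1 / (↑(Ideal.span ({a, b} : Set D)) : FI))
      = ↑(Submodule.colon (Ideal.span {b} : Ideal D) (Ideal.span {a})) := by
    rw [Set.pair_comm a b]
    exact colon_piece b a hb ha
  nth_rewrite 1 [hsplit]
  rw [add_mul, colon_piece a b ha hb, h2, ← coeIdeal_sup]

end VAux

open VAux in
/-- `D` is a `v`-domain iff `(((a) :_D (b)) + ((b) :_D (a)))^v = D` for all nonzero
`a, b ∈ D`. -/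
theorem vDomain_iff_colon_sum :
    (∀ F : FractionalIdeal (nonZeroDivisors D) K, F ≠ 0 → (F : Submodule D K).FG →
        IsVInvertible F) ↔
      ∀ a b : D, a ≠ 0 → b ≠ 0 →
        vop (((Submodule.colon (Ideal.span {a}) (Ideal.span {b}) ⊔
          Submodule.colon (Ideal.span {b}) (Ideal.span {a}) : Ideal D)) :
            FractionalIdeal (nonZeroDivisors D) K) = 1 := by
  constructor
  · intro H a b ha hb
    have hfg : ((↑(Ideal.span ({a, b} : Set D)) : FractionalIdeal (nonZeroDivisors D) K) :
        Submodule D K).FG := by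
      rw [coe_coeIdeal]
      exact Submodule.FG.map _ (Submodule.fg_span (Set.toFinite _))
    have h := H _ (coeIdeal_span_pair_ne_zero ha) hfg
    rwa [IsVInvertible, pair_bridge a b ha hb] at h
  · intro H
    classical
    -- pairs of nonzero elements give `v`-invertible ideals
    have pair_inv : ∀ a b : D, a ≠ 0 → b ≠ 0 →
        IsVInvertible (↑(Ideal.span ({a, b} : Set D)) :
          FractionalIdeal (nonZeroDivisors D) K) := by
      intro a b ha hb
      rw [IsVInvertible, pair_bridge a b ha hb]
      exact H a b ha hb
    -- nonzero finitely generated integral ideals are `v`-invertible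
    have span_inv : ∀ s : Finset D, Ideal.span (s : Set D) ≠ ⊥ →
        IsVInvertible (↑(Ideal.span (s : Set D)) :
          FractionalIdeal (nonZeroDivisors D) K) := by
      intro s
      induction s using Finset.induction with
      | empty => intro h; simp at h
      | @insert a s ha ih =>
          intro hne
          by_cases hbot : Ideal.span (s : Set D) = ⊥
          · have hspan : Ideal.span ((insert a s : Finset D) : Set D) = Ideal.span {a} := by
              rw [Finset.coe_insert, Ideal.span_insert, hbot, sup_bot_eq]
            have ha0 : a ≠ 0 := by
              rintro rfl
              apply hne
              rw [hspan, Ideal.span_singleton_eq_bot]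
            rw [hspan, coeIdeal_span_singleton]
            exact isVInvertible_spanSingleton fun h =>
              ha0 (IsFractionRing.injective D K (h.trans (_root_.map_zero _).symm))
          · by_cases ha0 : a = 0
            · subst ha0
              have : Ideal.span ((insert (0:D) s : Finset D) : Set D)
                  = Ideal.span (s : Set D) := by
                rw [Finset.coe_insert, ← Ideal.submodule_span_eq,
                  Submodule.span_insert_zero, Ideal.submodule_span_eq]
              rw [this]
              exact ih hbot
            · obtain ⟨Y, hY⟩ := key_identity a s
              have hspan : Ideal.span ((insert a s : Finset D) : Set D)
                  = Ideal.span (s : Set D) + Ideal.span {a} := by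
                rw [Finset.coe_insert, Ideal.span_insert, Ideal.add_eq_sup, sup_comm]
              have hprod : IsVInvertible
                  (↑(Ideal.span (s : Set D) * ∏ x ∈ s, (Ideal.span {x} + Ideal.span {a})) :
                    FractionalIdeal (nonZeroDivisors D) K) := by
                rw [coeIdeal_mul]
                refine isVInvertible_mul (ih hbot) ?_
                rw [show ((∏ x ∈ s, (Ideal.span {x} + Ideal.span {a}) : Ideal D) :
                      FractionalIdeal (nonZeroDivisors D) K)
                    = ∏ x ∈ s, ((Ideal.span {x} + Ideal.span {a} : Ideal D) :
                      FractionalIdeal (nonZeroDivisors D) K) from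
                  map_prod (coeIdealHom (nonZeroDivisors D) K) _ s]
                refine Finset.prod_induction _ IsVInvertible
                  (fun _ _ h1 h2 => isVInvertible_mul h1 h2) isVInvertible_one ?_
                intro x hx
                by_cases hx0 : x = 0
                · subst hx0
                  rw [show Ideal.span ({(0:D)} : Set D) + Ideal.span {a} = Ideal.span {a} by
                    rw [Ideal.span_singleton_eq_bot.mpr rfl, Ideal.add_eq_sup, bot_sup_eq]]
                  rw [coeIdeal_span_singleton]
                  exact isVInvertible_spanSingleton fun h =>
                    ha0 (IsFractionRing.injective D K (h.trans (_root_.map_zero _).symm))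
                · rw [show Ideal.span ({x} : Set D) + Ideal.span {a}
                      = Ideal.span ({x, a} : Set D) by
                    rw [Ideal.span_insert, Ideal.add_eq_sup]]
                  exact pair_inv x a hx0 ha0
              have hfac : (↑(Ideal.span ((insert a s : Finset D) : Set D)) :
                    FractionalIdeal (nonZeroDivisors D) K) * ↑Y
                  = ↑(Ideal.span (s : Set D) * ∏ x ∈ s, (Ideal.span {x} + Ideal.span {a})) := by
                rw [hspan, ← coeIdeal_mul, hY]
              exact isVInvertible_of_mul (hfac ▸ hprod)
    -- the general case, by clearing denominators
    intro F hF0 hFG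
    obtain ⟨d, dI, hd, hF⟩ := exists_eq_spanSingleton_mul F
    have hd' : algebraMap D K d ≠ 0 := fun h =>
      hd (IsFractionRing.injective D K (h.trans (_root_.map_zero _).symm))
    have hdI : (↑dI : FractionalIdeal (nonZeroDivisors D) K)
        = spanSingleton (nonZeroDivisors D) (algebraMap D K d) * F := by
      rw [hF, ← mul_assoc, spanSingleton_mul_spanSingleton, mul_inv_cancel₀ hd',
        spanSingleton_one, one_mul]
    have hdI0 : dI ≠ ⊥ := by
      rintro rfl
      exact mul_ne_zero' (spanSingleton_ne_zero_iff.mpr hd') hF0 (by rw [← hdI, coeIdeal_bot])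
    have hdIfg : (dI : Submodule D D).FG := by
      apply Submodule.fg_of_fg_map_injective (Algebra.linearMap D K)
        (IsFractionRing.injective D K)
      have : ((↑dI : FractionalIdeal (nonZeroDivisors D) K) : Submodule D K).FG := by
        rw [hdI, coe_mul, coe_spanSingleton]
        exact Submodule.FG.mul (Submodule.fg_span_singleton _) hFG
      rwa [coe_coeIdeal] at this
    obtain ⟨t, ht⟩ := hdIfg
    have ht' : Ideal.span ((t : Finset D) : Set D) = dI := by
      rw [← Ideal.submodule_span_eq]; exact ht
    have : IsVInvertible (↑dI : FractionalIdeal (nonZeroDivisors D) K) := by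
      rw [← ht']
      exact span_inv t (by rw [ht']; exact hdI0)
    rw [hdI, mul_comm] at this
    exact isVInvertible_of_mul this
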